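/- Let Φ: M_d(ℂ) → M_k(ℂ) be given by Φ(X) = (id_k ⊗ Tr_n)(W X W*) for an isometry W: ℂ^d → ℂ^k ⊗ ℂ^n with d = tkn, and let Φ̄(X) = (id ⊗ Tr)(W̄ X Wᵗ). Then for the maximally entangled (Bell) state B on ℂ^d ⊗ ℂ^d, the largest eigenvalue of (Φ ⊗ Φ̄)(B) is at least t = d/(kn). -/

import Mathlib

open scoped ComplexOrder

/-- Partial trace over the second (environment) tensor factor. -/
noncomputable def ptraceEnv {k n : ℕ}
    (M : Matrix (Fin k × Fin n) (Fin k × Fin n) ℂ) : Matrix (Fin k) (Fin k) ℂ :=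
  fun i j => ∑ e : Fin n, M (i, e) (j, e)

/-- The channel `Φ(X) = (id_k ⊗ Tr_n)(W X W*)`. -/
noncomputable def channelPhi {k n d : ℕ} (W : Matrix (Fin k × Fin n) (Fin d) ℂ)
    (X : Matrix (Fin d) (Fin d) ℂ) : Matrix (Fin k) (Fin k) ℂ :=
  ptraceEnv (W * X * W.conjTranspose)

/-- The output `(Φ ⊗ Φ̄)(X)` of the product channel, `Φ̄` being the complex conjugate
channel: partial trace over both environments of `(W ⊗ W̄) X (W ⊗ W̄)*`. -/
noncomputable def productChannelOut {k n d : ℕ}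
    (W : Matrix (Fin k × Fin n) (Fin d) ℂ)
    (X : Matrix (Fin d × Fin d) (Fin d × Fin d) ℂ) :
    Matrix (Fin k × Fin k) (Fin k × Fin k) ℂ :=
  fun p q => ∑ e : Fin n, ∑ f : Fin n,
    (∑ r : Fin d × Fin d, ∑ s : Fin d × Fin d,
      W (p.1, e) r.1 * (starRingEnd ℂ) (W (p.2, f) r.2) * X r s *
        (starRingEnd ℂ) (W (q.1, e) s.1) * W (q.2, f) s.2)

/-- The Bell (maximally entangled) state on `ℂ^d ⊗ ℂ^d`. -/
noncomputable def bellState (d : ℕ) :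
    Matrix (Fin d × Fin d) (Fin d × Fin d) ℂ :=
  fun r s => if r.1 = r.2 ∧ s.1 = s.2 then (d : ℂ)⁻¹ else 0

open Matrix in
/-- Rayleigh-quotient lower bound on the largest eigenvalue of a Hermitian matrix. -/
lemma rayleigh_aux {m : Type*} [Fintype m] [DecidableEq m] [Nonempty m]
    {M : Matrix m m ℂ} (hM : M.IsHermitian) (v : m → ℂ) (c t : ℝ) (hc : 0 < c)
    (hv : star v ⬝ᵥ v = (c : ℂ))
    (ht : t * c ≤ (star v ⬝ᵥ (M *ᵥ v)).re) :
    ∃ i, t ≤ hM.eigenvalues i := by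
  classical
  set U : Matrix m m ℂ := (hM.eigenvectorUnitary : Matrix m m ℂ) with hU
  set w : m → ℂ := star U *ᵥ v with hwdef
  have hUU : U * star U = 1 := (Matrix.mem_unitaryGroup_iff).mp hM.eigenvectorUnitary.2
  have hsw : star v ᵥ* U = star w := by
    rw [hwdef, star_mulVec, Matrix.star_eq_conjTranspose, conjTranspose_conjTranspose]
  have h1 : star w ⬝ᵥ w = (c : ℂ) := by
    rw [← hsw, ← dotProduct_mulVec, mulVec_mulVec, hUU, one_mulVec, hv]
  have hwnorm : ∑ i, Complex.normSq (w i) = c := by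
    have h2 : ((∑ i, Complex.normSq (w i) : ℝ) : ℂ) = (c : ℂ) := by
      rw [← h1]
      push_cast
      simp [dotProduct, Complex.normSq_eq_conj_mul_self]
    exact_mod_cast h2
  have hQ : star v ⬝ᵥ (M *ᵥ v) = ∑ i, (hM.eigenvalues i : ℂ) * (Complex.normSq (w i) : ℂ) := by
    conv_lhs => rw [hM.spectral_theorem, Unitary.conjStarAlgAut_apply, ← mulVec_mulVec, ← mulVec_mulVec,
      dotProduct_mulVec, hsw]
    rw [dotProduct_mulVec]
    have hdw : star w ᵥ* (diagonal (RCLike.ofReal ∘ hM.eigenvalues)) =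
        fun i => (hM.eigenvalues i : ℂ) * star (w i) := by
      funext i
      simp [Matrix.vecMul, dotProduct, Matrix.diagonal, mul_comm]
    rw [hdw]
    simp only [dotProduct, Complex.normSq_eq_conj_mul_self, Complex.star_def]
    exact Finset.sum_congr rfl fun i _ => by push_cast; ring
  have hre : (star v ⬝ᵥ (M *ᵥ v)).re = ∑ i, hM.eigenvalues i * Complex.normSq (w i) := by
    rw [hQ]
    simp
  obtain ⟨i0, -, hmax⟩ := Finset.univ.exists_max_image hM.eigenvalues Finset.univ_nonempty
  refine ⟨i0, ?_⟩
  have hle : ∑ i, hM.eigenvalues i * Complex.normSq (w i) ≤ hM.eigenvalues i0 * c := by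
    rw [← hwnorm, Finset.mul_sum]
    refine Finset.sum_le_sum fun i _ => ?_
    exact mul_le_mul_of_nonneg_right (hmax i (Finset.mem_univ i)) (Complex.normSq_nonneg _)
  have h3 : t * c ≤ hM.eigenvalues i0 * c := by
    calc t * c ≤ _ := ht
    _ = _ := hre
    _ ≤ _ := hle
  exact le_of_mul_le_mul_right h3 hc

/-- Summing a function supported on the diagonal of a product type. -/
lemma diagSum {d : ℕ} (g : Fin d → Fin d → ℂ) :
    ∑ r : Fin d × Fin d, (if r.1 = r.2 then g r.1 r.2 else 0) = ∑ a, g a a := by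
  rw [Fintype.sum_prod_type]
  simp

lemma innerSum4 {d : ℕ} (A B C D : Fin d → ℂ) (t : ℂ) :
    (∑ r : Fin d × Fin d, ∑ s : Fin d × Fin d,
      A r.1 * B r.2 * (if r.1 = r.2 ∧ s.1 = s.2 then t else 0) * C s.1 * D s.2)
    = t * ((∑ a, A a * B a) * (∑ b, C b * D b)) := by
  have h : ∀ r s : Fin d × Fin d,
      A r.1 * B r.2 * (if r.1 = r.2 ∧ s.1 = s.2 then t else 0) * C s.1 * D s.2
      = t * ((if r.1 = r.2 then A r.1 * B r.2 else 0) *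
          (if s.1 = s.2 then C s.1 * D s.2 else 0)) := by
    intro r s
    by_cases h1 : r.1 = r.2 <;> by_cases h2 : s.1 = s.2 <;>
      (try simp [h1, h2]) <;> (try ring)
  calc ∑ r : Fin d × Fin d, ∑ s : Fin d × Fin d,
      A r.1 * B r.2 * (if r.1 = r.2 ∧ s.1 = s.2 then t else 0) * C s.1 * D s.2
      = ∑ r : Fin d × Fin d, ∑ s : Fin d × Fin d,
        t * ((if r.1 = r.2 then A r.1 * B r.2 else 0) *
          (if s.1 = s.2 then C s.1 * D s.2 else 0)) := by
        exact Finset.sum_congr rfl fun r _ => Finset.sum_congr rfl fun s _ => h r s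
    _ = t * ∑ r : Fin d × Fin d, (if r.1 = r.2 then A r.1 * B r.2 else 0) *
          (∑ s : Fin d × Fin d, (if s.1 = s.2 then C s.1 * D s.2 else 0)) := by
        rw [Finset.mul_sum]
        exact Finset.sum_congr rfl fun r _ => by rw [Finset.mul_sum, ← Finset.mul_sum]
    _ = t * ((∑ a, A a * B a) * (∑ b, C b * D b)) := by
        rw [← Finset.sum_mul, diagSum (fun a b => A a * B b), diagSum (fun a b => C a * D b)]

lemma prodOut_diag {k n d : ℕ} (W : Matrix (Fin k × Fin n) (Fin d) ℂ) (i j : Fin k) :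
    productChannelOut W (bellState d) (i, i) (j, j) =
      (d : ℂ)⁻¹ * ∑ e : Fin n, ∑ f : Fin n,
        (∑ a, W (i, e) a * (starRingEnd ℂ) (W (i, f) a)) *
          (starRingEnd ℂ) (∑ b, W (j, e) b * (starRingEnd ℂ) (W (j, f) b)) := by
  unfold productChannelOut bellState
  dsimp only
  rw [Finset.mul_sum]
  refine Finset.sum_congr rfl fun e _ => ?_
  rw [Finset.mul_sum]
  refine Finset.sum_congr rfl fun f _ => ?_
  rw [innerSum4 (fun a => W (i, e) a) (fun a => (starRingEnd ℂ) (W (i, f) a))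
    (fun a => (starRingEnd ℂ) (W (j, e) a)) (fun a => W (j, f) a) ((d:ℂ)⁻¹)]
  simp only [map_sum, map_mul, Complex.conj_conj]

open Matrix in
theorem stmt_12 (k n d : ℕ) (hk : 0 < k) (hn : 0 < n) (hd : 0 < d)
    (W : Matrix (Fin k × Fin n) (Fin d) ℂ)
    (hW : W.conjTranspose * W = 1)
    (hM : (productChannelOut W (bellState d)).IsHermitian) :
    ∃ i, (d : ℝ) / (k * n) ≤ hM.eigenvalues i := by
  classical
  haveI : NeZero k := ⟨hk.ne'⟩
  set M := productChannelOut W (bellState d) with hMdef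
  set u : Fin k × Fin k → ℂ := fun p => if p.1 = p.2 then 1 else 0 with hu
  -- P i e f and S e f
  set P : Fin k → Fin n → Fin n → ℂ :=
    fun i e f => ∑ a, W (i, e) a * (starRingEnd ℂ) (W (i, f) a) with hP
  set S : Fin n → Fin n → ℂ := fun e f => ∑ i, P i e f with hS
  set ce : Fin n → ℝ := fun e => ∑ i, ∑ a, Complex.normSq (W (i, e) a) with hce
  -- norm of u
  have hun : star u ⬝ᵥ u = ((k : ℝ) : ℂ) := by
    simp only [dotProduct, Pi.star_apply, hu]
    rw [show (∑ p : Fin k × Fin k, star (if p.1 = p.2 then (1:ℂ) else 0) *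
        (if p.1 = p.2 then (1:ℂ) else 0)) =
        ∑ p : Fin k × Fin k, (if p.1 = p.2 then (1:ℂ) else 0) from
      Finset.sum_congr rfl fun p _ => by by_cases h : p.1 = p.2 <;> simp [h]]
    rw [diagSum (fun a b => (1 : ℂ))]
    simp
  -- Rayleigh quotient
  have hQ : star u ⬝ᵥ (M *ᵥ u) = ∑ i, ∑ j, M (i, i) (j, j) := by
    have hin : ∀ p, (M *ᵥ u) p = ∑ j, M p (j, j) := by
      intro p
      calc (M *ᵥ u) p = ∑ q : Fin k × Fin k, (if q.1 = q.2 then M p q else 0) := by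
            simp [Matrix.mulVec, dotProduct, hu, mul_ite]
        _ = ∑ j, M p (j, j) := by simpa using diagSum fun a b => M p (a, b)
    calc star u ⬝ᵥ (M *ᵥ u)
        = ∑ p : Fin k × Fin k, (if p.1 = p.2 then (M *ᵥ u) p else 0) := by
          simp only [dotProduct, Pi.star_apply, hu]
          refine Finset.sum_congr rfl fun p _ => ?_
          by_cases h : p.1 = p.2 <;> simp [h]
      _ = ∑ i, (M *ᵥ u) (i, i) := by simpa using diagSum fun a b => (M *ᵥ u) (a, b)
      _ = ∑ i, ∑ j, M (i, i) (j, j) := Finset.sum_congr rfl fun i _ => hin (i, i)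
  -- rewrite using prodOut_diag and swap sums
  have hQ2 : star u ⬝ᵥ (M *ᵥ u) =
      (d : ℂ)⁻¹ * ∑ e, ∑ f, S e f * (starRingEnd ℂ) (S e f) := by
    rw [hQ]
    have h1 : ∀ i j, M (i, i) (j, j) =
        (d : ℂ)⁻¹ * ∑ e, ∑ f, P i e f * (starRingEnd ℂ) (P j e f) := fun i j =>
      prodOut_diag W i j
    calc ∑ i, ∑ j, M (i, i) (j, j)
        = (d : ℂ)⁻¹ * ∑ i, ∑ j, ∑ e, ∑ f, P i e f * (starRingEnd ℂ) (P j e f) := by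
          rw [Finset.mul_sum]
          refine Finset.sum_congr rfl fun i _ => ?_
          rw [Finset.mul_sum]
          exact Finset.sum_congr rfl fun j _ => h1 i j
      _ = (d : ℂ)⁻¹ * ∑ e, ∑ f, ∑ i, ∑ j, P i e f * (starRingEnd ℂ) (P j e f) := by
          congr 1
          calc ∑ i, ∑ j, ∑ e, ∑ f, P i e f * (starRingEnd ℂ) (P j e f)
              = ∑ i, ∑ e, ∑ f, ∑ j, P i e f * (starRingEnd ℂ) (P j e f) :=
                Finset.sum_congr rfl fun i _ => by
                  rw [Finset.sum_comm]
                  exact Finset.sum_congr rfl fun e _ => Finset.sum_comm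
            _ = ∑ e, ∑ f, ∑ i, ∑ j, P i e f * (starRingEnd ℂ) (P j e f) := by
                  rw [Finset.sum_comm]
                  exact Finset.sum_congr rfl fun e _ => Finset.sum_comm
      _ = (d : ℂ)⁻¹ * ∑ e, ∑ f, S e f * (starRingEnd ℂ) (S e f) := by
          congr 1
          refine Finset.sum_congr rfl fun e _ => Finset.sum_congr rfl fun f _ => ?_
          rw [hS]
          rw [map_sum, Finset.sum_mul_sum]
          try simp [Finset.mul_sum]
  -- real part
  have hre : (star u ⬝ᵥ (M *ᵥ u)).re =
      (d : ℝ)⁻¹ * ∑ e, ∑ f, Complex.normSq (S e f) := by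
    have : star u ⬝ᵥ (M *ᵥ u) =
        (((d : ℝ)⁻¹ * ∑ e, ∑ f, Complex.normSq (S e f) : ℝ) : ℂ) := by
      rw [hQ2]
      push_cast
      congr 1
      refine Finset.sum_congr rfl fun e _ => Finset.sum_congr rfl fun f _ => ?_
      rw [Complex.mul_conj]
    rw [this, Complex.ofReal_re]
  -- S e e is real nonnegative
  have hSee : ∀ e, S e e = ((ce e : ℝ) : ℂ) := by
    intro e
    rw [hS, hce]
    push_cast
    refine Finset.sum_congr rfl fun i _ => ?_
    rw [hP]
    refine Finset.sum_congr rfl fun a _ => ?_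
    rw [Complex.mul_conj]
  -- trace identity: ∑ e, ce e = d
  have htr : ∑ e, ce e = (d : ℝ) := by
    have h0 := congrArg Matrix.trace hW
    rw [Matrix.trace_one] at h0
    have h1 : Matrix.trace (W.conjTranspose * W) =
        ((∑ e, ce e : ℝ) : ℂ) := by
      rw [Matrix.trace]
      push_cast
      rw [show ∑ a, (W.conjTranspose * W).diag a =
          ∑ a, ∑ p : Fin k × Fin n, ((Complex.normSq (W p a) : ℝ) : ℂ) from
        Finset.sum_congr rfl fun a _ => Finset.sum_congr rfl fun p _ => by
          simp [Matrix.conjTranspose_apply, Complex.normSq_eq_conj_mul_self]]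
      rw [Finset.sum_comm]
      rw [Fintype.sum_prod_type]
      rw [Finset.sum_comm]
      refine Finset.sum_congr rfl fun e _ => ?_
      rw [hce]
      push_cast
      rfl
    rw [h1] at h0
    have : ((∑ e, ce e : ℝ) : ℂ) = ((d : ℝ) : ℂ) := by
      rw [h0]; simp
    exact_mod_cast this
  -- ce e ≥ 0
  have hce0 : ∀ e, 0 ≤ ce e := fun e =>
    Finset.sum_nonneg fun i _ => Finset.sum_nonneg fun a _ => Complex.normSq_nonneg _
  -- lower bound on the Rayleigh quotient
  have hlow : (d : ℝ) / (k * n) * k ≤ (star u ⬝ᵥ (M *ᵥ u)).re := by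
    rw [hre]
    have hb1 : ∑ e, (ce e) ^ 2 ≤ ∑ e, ∑ f, Complex.normSq (S e f) := by
      refine Finset.sum_le_sum fun e _ => ?_
      have : Complex.normSq (S e e) = (ce e) ^ 2 := by
        rw [hSee e, Complex.normSq_ofReal]; ring
      rw [← this]
      exact Finset.single_le_sum (fun f _ => Complex.normSq_nonneg _) (Finset.mem_univ e)
    have hb2 : (d : ℝ) ^ 2 / n ≤ ∑ e, (ce e) ^ 2 := by
      have := sq_sum_le_card_mul_sum_sq (s := Finset.univ) (f := ce)
      rw [htr] at this
      simp only [Finset.card_univ, Fintype.card_fin] at this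
      rw [div_le_iff₀ (by exact_mod_cast hn)]
      calc (d:ℝ)^2 ≤ (n : ℝ) * ∑ e, (ce e)^2 := this
        _ = (∑ e, (ce e)^2) * n := by ring
    have hdpos : (0:ℝ) < d := by exact_mod_cast hd
    have hnpos : (0:ℝ) < n := by exact_mod_cast hn
    have hkpos : (0:ℝ) < k := by exact_mod_cast hk
    calc (d : ℝ) / (k * n) * k = (d : ℝ) / n := by field_simp
      _ = (d:ℝ)⁻¹ * ((d:ℝ)^2 / n) := by field_simp
      _ ≤ (d:ℝ)⁻¹ * ∑ e, (ce e)^2 := by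
          exact mul_le_mul_of_nonneg_left hb2 (by positivity)
      _ ≤ (d:ℝ)⁻¹ * ∑ e, ∑ f, Complex.normSq (S e f) := by
          exact mul_le_mul_of_nonneg_left hb1 (by positivity)
  exact rayleigh_aux hM u (k : ℝ) ((d : ℝ) / (k * n)) (by exact_mod_cast hk) hun hlow
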